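/- Let N ≥ 2, ℓ_1,...,ℓ_N > 0, and let τ > 0 satisfy sin(τℓ_j) ≠ 0 for all j and ∑_j cot(τℓ_j) = 0. Set ρ = (∑_j ℓ_j/sin²(τℓ_j))^{-1} and γ_0 = 1/(16eN). Then for all γ ∈ [0,γ_0] and all complex z with |z − τ| ≤ γρ, one has sin(zℓ_j) ≠ 0 for all j, and |ψ_0(z) − (z−τ)/ρ| ≤ γ/2, where ψ_0(z) = −∑_{j=1}^N cot(zℓ_j). -/

import Mathlib

open Complex Real Finset


lemma abs_sin_le_two_abs {w : ℂ} (hw : ‖w‖ ≤ 1) :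
    ‖Complex.sin w‖ ≤ 2 * ‖w‖ := by
  have h1 : ‖w * Complex.I‖ ≤ 1 := by simpa using hw
  have h2 : ‖-w * Complex.I‖ ≤ 1 := by simpa using hw
  have e1 := Complex.norm_exp_sub_one_le h1
  have e2 := Complex.norm_exp_sub_one_le h2
  have hsin : Complex.sin w =
      ((Complex.exp (-w * Complex.I) - 1) - (Complex.exp (w * Complex.I) - 1)) * Complex.I / 2 := by
    rw [Complex.sin]; ring
  rw [hsin, norm_div, norm_mul, Complex.norm_I, Complex.norm_two, mul_one]
  have tri := norm_sub_le (Complex.exp (-w * Complex.I) - 1)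
      (Complex.exp (w * Complex.I) - 1)
  have : ‖w * Complex.I‖ = ‖w‖ := by simp
  have h2' : ‖-w * Complex.I‖ = ‖w‖ := by simp
  rw [this] at e1
  rw [h2'] at e2
  linarith

lemma abs_cos_sub_one_le {w : ℂ} (hw : ‖w‖ ≤ 1) :
    ‖Complex.cos w - 1‖ ≤ ‖w‖ ^ 2 := by
  have h1 : ‖w * Complex.I‖ ≤ 1 := by simpa using hw
  have h2 : ‖-w * Complex.I‖ ≤ 1 := by simpa using hw
  have e1 := Complex.norm_exp_sub_one_sub_id_le h1
  have e2 := Complex.norm_exp_sub_one_sub_id_le h2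
  have hcos : Complex.cos w - 1 =
      ((Complex.exp (w * Complex.I) - 1 - w * Complex.I)
        + (Complex.exp (-w * Complex.I) - 1 - (-w * Complex.I))) / 2 := by
    rw [Complex.cos]; ring
  rw [hcos, norm_div, Complex.norm_two]
  have tri := norm_add_le (Complex.exp (w * Complex.I) - 1 - w * Complex.I)
      (Complex.exp (-w * Complex.I) - 1 - (-w * Complex.I))
  have ha : ‖w * Complex.I‖ = ‖w‖ := by simp
  have hb : ‖-w * Complex.I‖ = ‖w‖ := by simp
  rw [ha] at e1
  rw [hb] at e2
  rw [div_le_iff₀ (by norm_num : (0:ℝ) < 2)]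
  nlinarith

lemma abs_sin_sub_self_le {w : ℂ} (hw : ‖w‖ ≤ 1) :
    ‖Complex.sin w - w‖ ≤ ‖w‖ ^ 2 := by
  have h1 : ‖w * Complex.I‖ ≤ 1 := by simpa using hw
  have h2 : ‖-w * Complex.I‖ ≤ 1 := by simpa using hw
  have e1 := Complex.norm_exp_sub_one_sub_id_le h1
  have e2 := Complex.norm_exp_sub_one_sub_id_le h2
  have hsin : Complex.sin w - w =
      ((Complex.exp (-w * Complex.I) - 1 - (-w * Complex.I))
        - (Complex.exp (w * Complex.I) - 1 - w * Complex.I)) * Complex.I / 2 := by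
    rw [Complex.sin]
    have : Complex.I * Complex.I = -1 := Complex.I_mul_I
    field_simp
    ring_nf
    rw [Complex.I_sq]
    ring
  rw [hsin, norm_div, norm_mul, Complex.norm_I, Complex.norm_two, mul_one]
  have tri := norm_sub_le (Complex.exp (-w * Complex.I) - 1 - (-w * Complex.I))
      (Complex.exp (w * Complex.I) - 1 - w * Complex.I)
  have ha : ‖w * Complex.I‖ = ‖w‖ := by simp
  have hb : ‖-w * Complex.I‖ = ‖w‖ := by simp
  rw [ha] at e1
  rw [hb] at e2
  rw [div_le_iff₀ (by norm_num : (0:ℝ) < 2)]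
  nlinarith

set_option maxHeartbeats 1000000 in
lemma key_term (a : ℝ) (w : ℂ) (γ : ℝ) (ha : Real.sin a ≠ 0)
    (hγ0 : 0 ≤ γ) (hγ1 : γ ≤ 1/32)
    (hw : ‖w‖ ≤ γ * Real.sin a ^ 2) :
    Complex.sin ((a : ℂ) + w) ≠ 0 ∧
    ‖Complex.sin w / (Complex.sin ((a:ℂ) + w) * Complex.sin (a:ℂ))
      - w / Complex.sin (a:ℂ) ^ 2‖ ≤ 8 * γ ^ 2 := by
  set s : ℝ := |Real.sin a| with hs
  have hs0 : 0 < s := abs_pos.mpr ha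
  have hs1 : s ≤ 1 := Real.abs_sin_le_one a
  have hA : ‖Complex.sin (a:ℂ)‖ = s := by
    rw [← Complex.ofReal_sin, Complex.norm_real, Real.norm_eq_abs]
  have hC : ‖Complex.cos (a:ℂ)‖ ≤ 1 := by
    rw [← Complex.ofReal_cos, Complex.norm_real, Real.norm_eq_abs]
    exact Real.abs_cos_le_one a
  have hAne : Complex.sin (a:ℂ) ≠ 0 := by
    intro h
    rw [h, norm_zero] at hA
    exact hs0.ne hA
  set W : ℝ := ‖w‖ with hW
  have hW0 : 0 ≤ W := by rw [hW]; exact norm_nonneg w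
  have hws2 : W ≤ γ * s ^ 2 := by
    rw [hW, hs, _root_.sq_abs]
    exact hw
  have hws : W ≤ γ * s := by nlinarith
  have hw1 : W ≤ 1 := by nlinarith
  have h1 := abs_sin_le_two_abs (w := w) (by rw [← hW]; exact hw1)
  have h2 := abs_cos_sub_one_le (w := w) (by rw [← hW]; exact hw1)
  have h3 := abs_sin_sub_self_le (w := w) (by rw [← hW]; exact hw1)
  rw [← hW] at h1 h2 h3
  -- lower bound for sin(a+w)
  have hBsub : ‖Complex.sin ((a:ℂ) + w) - Complex.sin (a:ℂ)‖ ≤ s * W ^ 2 + 2 * W := by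
    have hid : Complex.sin ((a:ℂ) + w) - Complex.sin (a:ℂ)
        = Complex.sin (a:ℂ) * (Complex.cos w - 1) + Complex.cos (a:ℂ) * Complex.sin w := by
      rw [Complex.sin_add]; ring
    rw [hid]
    calc ‖Complex.sin (a:ℂ) * (Complex.cos w - 1) + Complex.cos (a:ℂ) * Complex.sin w‖
        ≤ ‖Complex.sin (a:ℂ) * (Complex.cos w - 1)‖
          + ‖Complex.cos (a:ℂ) * Complex.sin w‖ := norm_add_le _ _
      _ = s * ‖Complex.cos w - 1‖
          + ‖Complex.cos (a:ℂ)‖ * ‖Complex.sin w‖ := by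
          rw [norm_mul, norm_mul, hA]
      _ ≤ s * W ^ 2 + 2 * W := by
          have hsn := norm_nonneg (Complex.sin w)
          have e1 : s * ‖Complex.cos w - 1‖ ≤ s * W ^ 2 :=
            mul_le_mul_of_nonneg_left h2 hs0.le
          have e2 : ‖Complex.cos (a:ℂ)‖ * ‖Complex.sin w‖ ≤ 2 * W :=
            le_trans (mul_le_mul hC le_rfl hsn zero_le_one) (by linarith)
          linarith
  have hBlow : s / 2 ≤ ‖Complex.sin ((a:ℂ) + w)‖ := by
    have tri : s - ‖Complex.sin ((a:ℂ) + w)‖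
        ≤ ‖Complex.sin ((a:ℂ) + w) - Complex.sin (a:ℂ)‖ := by
      have h := norm_sub_norm_le (Complex.sin (a:ℂ)) (Complex.sin ((a:ℂ) + w))
      rw [hA] at h
      rw [norm_sub_rev]
      exact h
    have hsmall : s * W ^ 2 + 2 * W ≤ s / 2 := by nlinarith
    linarith
  have hBpos : 0 < ‖Complex.sin ((a:ℂ) + w)‖ := lt_of_lt_of_le (by linarith) hBlow
  have hBne : Complex.sin ((a:ℂ) + w) ≠ 0 := by
    intro h
    rw [h, norm_zero] at hBpos
    exact lt_irrefl 0 hBpos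
  refine ⟨hBne, ?_⟩
  have hfrac : Complex.sin w / (Complex.sin ((a:ℂ) + w) * Complex.sin (a:ℂ))
      - w / Complex.sin (a:ℂ) ^ 2
      = (Complex.sin (a:ℂ) * Complex.sin w - w * Complex.sin ((a:ℂ) + w))
        / (Complex.sin ((a:ℂ) + w) * Complex.sin (a:ℂ) ^ 2) := by
    field_simp
  rw [hfrac]
  have hnum : ‖Complex.sin (a:ℂ) * Complex.sin w - w * Complex.sin ((a:ℂ) + w)‖
      ≤ 4 * W ^ 2 := by
    have hid : Complex.sin (a:ℂ) * Complex.sin w - w * Complex.sin ((a:ℂ) + w)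
        = Complex.sin (a:ℂ) * ((Complex.sin w - w) - w * (Complex.cos w - 1))
          - w * (Complex.cos (a:ℂ) * Complex.sin w) := by
      rw [Complex.sin_add]; ring
    rw [hid]
    have t1 : ‖Complex.sin (a:ℂ) * ((Complex.sin w - w) - w * (Complex.cos w - 1))‖
        ≤ 2 * W ^ 2 := by
      rw [norm_mul, hA]
      have tri := norm_sub_le (Complex.sin w - w) (w * (Complex.cos w - 1))
      rw [norm_mul, ← hW] at tri
      have hb : ‖Complex.sin w - w‖ + W * ‖Complex.cos w - 1‖
          ≤ W ^ 2 + W * W ^ 2 := by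
        have := mul_le_mul_of_nonneg_left h2 hW0
        linarith
      have : ‖(Complex.sin w - w) - w * (Complex.cos w - 1)‖ ≤ 2 * W ^ 2 := by
        nlinarith
      nlinarith [norm_nonneg ((Complex.sin w - w) - w * (Complex.cos w - 1))]
    have t2 : ‖w * (Complex.cos (a:ℂ) * Complex.sin w)‖ ≤ 2 * W ^ 2 := by
      rw [norm_mul, norm_mul, ← hW]
      have hsn := norm_nonneg (Complex.sin w)
      have e2 : ‖Complex.cos (a:ℂ)‖ * ‖Complex.sin w‖ ≤ 2 * W :=
        le_trans (mul_le_mul hC le_rfl hsn zero_le_one) (by linarith)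
      nlinarith
    have tri := norm_sub_le
      (Complex.sin (a:ℂ) * ((Complex.sin w - w) - w * (Complex.cos w - 1)))
      (w * (Complex.cos (a:ℂ) * Complex.sin w))
    linarith
  rw [norm_div, norm_mul, norm_pow, hA]
  rw [div_le_iff₀ (mul_pos hBpos (pow_pos hs0 2))]
  calc ‖Complex.sin (a:ℂ) * Complex.sin w - w * Complex.sin ((a:ℂ) + w)‖
      ≤ 4 * W ^ 2 := hnum
    _ ≤ 4 * (γ ^ 2 * s ^ 4) := by nlinarith
    _ ≤ 8 * γ ^ 2 * (s / 2 * s ^ 2) := by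
        have hkey : 0 ≤ γ ^ 2 * s ^ 3 * (1 - s) :=
          mul_nonneg (mul_nonneg (sq_nonneg γ) (pow_nonneg hs0.le 3)) (by linarith)
        nlinarith [hkey]
    _ ≤ 8 * γ ^ 2 * (‖Complex.sin ((a:ℂ) + w)‖ * s ^ 2) := by
        have h8 : (0:ℝ) ≤ 8 * γ ^ 2 := by positivity
        have := mul_le_mul_of_nonneg_right hBlow (le_of_lt (pow_pos hs0 2))
        nlinarith

/-- On the disk `D(τ, γρ)` with `γ ≤ γ₀ = 1/(16eN)`, the secular function
`ψ₀(z) = −∑ cot(z ℓ_j)` has no singularity and is close to its linearization: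
`|ψ₀(z) − (z−τ)/ρ| ≤ γ/2`. -/
theorem psi0_linearization (N : ℕ) (hN : 2 ≤ N) (ℓ : Fin N → ℝ) (hℓ : ∀ j, 0 < ℓ j)
    (τ : ℝ) (hτ : 0 < τ) (hsin : ∀ j, Real.sin (τ * ℓ j) ≠ 0)
    (hzero : ∑ j : Fin N, Real.cot (τ * ℓ j) = 0)
    (ρ : ℝ) (hρ : ρ = (∑ j : Fin N, ℓ j / Real.sin (τ * ℓ j) ^ 2)⁻¹)
    (γ : ℝ) (hγ : γ ∈ Set.Icc 0 (1 / (16 * Real.exp 1 * N)))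
    (z : ℂ) (hz : ‖z - (τ : ℂ)‖ ≤ γ * ρ) :
    (∀ j, Complex.sin (z * (ℓ j : ℂ)) ≠ 0) ∧
    ‖(-∑ j : Fin N, Complex.cot (z * (ℓ j : ℂ))) - (z - (τ : ℂ)) / (ρ : ℂ)‖
      ≤ γ / 2 := by
  obtain ⟨hγ0, hγub⟩ := hγ
  haveI : Nonempty (Fin N) := ⟨⟨0, by omega⟩⟩
  have hN2 : (2:ℝ) ≤ (N:ℝ) := by exact_mod_cast hN
  have he2 : (2:ℝ) ≤ Real.exp 1 := by
    have := Real.exp_one_gt_d9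
    norm_num at this ⊢
    linarith
  have hden : (32:ℝ) ≤ 16 * Real.exp 1 * N := by nlinarith
  have hγ32 : γ ≤ 1/32 :=
    le_trans hγub (one_div_le_one_div_of_le (by norm_num) hden)
  set S : ℝ := ∑ j : Fin N, ℓ j / Real.sin (τ * ℓ j) ^ 2 with hS
  have hSpos : 0 < S := by
    apply Finset.sum_pos
    · intro j _
      exact div_pos (hℓ j) (pow_two_pos_of_ne_zero (hsin j))
    · exact Finset.univ_nonempty
  have hρpos : 0 < ρ := by rw [hρ]; exact inv_pos.mpr hSpos
  have hwb : ∀ j, ‖(z - (τ:ℂ)) * (ℓ j : ℂ)‖ ≤ γ * Real.sin (τ * ℓ j) ^ 2 := by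
    intro j
    have habsw : ‖(z - (τ:ℂ)) * (ℓ j : ℂ)‖ = ‖z - (τ:ℂ)‖ * ℓ j := by
      rw [norm_mul, Complex.norm_real, Real.norm_eq_abs, abs_of_pos (hℓ j)]
    have hterm : ℓ j / Real.sin (τ * ℓ j) ^ 2 ≤ S :=
      Finset.single_le_sum
        (f := fun i => ℓ i / Real.sin (τ * ℓ i) ^ 2)
        (fun i _ => div_nonneg (hℓ i).le (sq_nonneg _)) (Finset.mem_univ j)
    have hsq : 0 < Real.sin (τ * ℓ j) ^ 2 := pow_two_pos_of_ne_zero (hsin j)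
    have hρl : ρ * ℓ j ≤ Real.sin (τ * ℓ j) ^ 2 := by
      rw [hρ, inv_mul_le_iff₀ hSpos]
      exact (div_le_iff₀ hsq).mp hterm
    calc ‖(z - (τ:ℂ)) * (ℓ j : ℂ)‖ = ‖z - (τ:ℂ)‖ * ℓ j := habsw
      _ ≤ γ * ρ * ℓ j := mul_le_mul_of_nonneg_right hz (hℓ j).le
      _ = γ * (ρ * ℓ j) := by ring
      _ ≤ γ * Real.sin (τ * ℓ j) ^ 2 := mul_le_mul_of_nonneg_left hρl hγ0
  have hkey := fun j =>
    key_term (τ * ℓ j) ((z - (τ:ℂ)) * (ℓ j : ℂ)) γ (hsin j) hγ0 hγ32 (hwb j)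
  have hzw : ∀ j, z * (ℓ j : ℂ) = ((τ * ℓ j : ℝ) : ℂ) + (z - (τ:ℂ)) * (ℓ j : ℂ) := by
    intro j
    push_cast
    ring
  have hne : ∀ j, Complex.sin (z * (ℓ j : ℂ)) ≠ 0 := by
    intro j
    rw [hzw j]
    exact (hkey j).1
  refine ⟨hne, ?_⟩
  have hAne : ∀ j, Complex.sin ((τ * ℓ j : ℝ) : ℂ) ≠ 0 := by
    intro j
    rw [← Complex.ofReal_sin]
    exact_mod_cast hsin j
  have hcot : ∀ j, Complex.cot ((τ * ℓ j : ℝ) : ℂ) - Complex.cot (z * (ℓ j : ℂ))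
      = Complex.sin ((z - (τ:ℂ)) * (ℓ j : ℂ)) /
        (Complex.sin (z * (ℓ j : ℂ)) * Complex.sin ((τ * ℓ j : ℝ) : ℂ)) := by
    intro j
    have hba : z * (ℓ j : ℂ) - ((τ * ℓ j : ℝ) : ℂ) = (z - (τ:ℂ)) * (ℓ j : ℂ) := by
      push_cast
      ring
    rw [← hba, Complex.sin_sub, Complex.cot_eq_cos_div_sin, Complex.cot_eq_cos_div_sin,
      div_sub_div _ _ (hAne j) (hne j),
      mul_comm (Complex.sin ((τ * ℓ j : ℝ) : ℂ)) (Complex.sin (z * (ℓ j : ℂ)))]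
    ring
  have hρC : (z - (τ:ℂ)) / (ρ : ℂ)
      = ∑ j : Fin N, (z - (τ:ℂ)) * (ℓ j : ℂ) / Complex.sin ((τ * ℓ j : ℝ) : ℂ) ^ 2 := by
    have hinv : ((ρ:ℝ):ℂ)⁻¹ = (S : ℂ) := by
      rw [hρ]
      push_cast
      rw [inv_inv]
    rw [div_eq_mul_inv, hinv, hS]
    push_cast
    rw [Finset.mul_sum]
    refine Finset.sum_congr rfl fun j _ => ?_
    push_cast
    ring
  have h0 : ∑ j : Fin N, Complex.cot ((τ * ℓ j : ℝ) : ℂ) = 0 := by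
    have hc : ((∑ j : Fin N, Real.cot (τ * ℓ j) : ℝ) : ℂ) = 0 := by
      rw [hzero]; norm_num
    rw [Complex.ofReal_sum] at hc
    simp only [Complex.ofReal_cot] at hc
    exact hc
  have hmain : (-∑ j : Fin N, Complex.cot (z * (ℓ j : ℂ))) - (z - (τ:ℂ)) / (ρ : ℂ)
      = ∑ j : Fin N,
          (Complex.sin ((z - (τ:ℂ)) * (ℓ j : ℂ)) /
            (Complex.sin (z * (ℓ j : ℂ)) * Complex.sin ((τ * ℓ j : ℝ) : ℂ))
           - (z - (τ:ℂ)) * (ℓ j : ℂ) / Complex.sin ((τ * ℓ j : ℝ) : ℂ) ^ 2) := by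
    rw [hρC]
    have hneg : -∑ j : Fin N, Complex.cot (z * (ℓ j : ℂ))
        = ∑ j : Fin N, (Complex.cot ((τ * ℓ j : ℝ) : ℂ) - Complex.cot (z * (ℓ j : ℂ))) := by
      rw [Finset.sum_sub_distrib, h0, zero_sub]
    rw [hneg, ← Finset.sum_sub_distrib]
    refine Finset.sum_congr rfl fun j _ => ?_
    rw [hcot j]
  rw [hmain]
  have hterm : ∀ j : Fin N,
      ‖Complex.sin ((z - (τ:ℂ)) * (ℓ j : ℂ)) /
          (Complex.sin (z * (ℓ j : ℂ)) * Complex.sin ((τ * ℓ j : ℝ) : ℂ))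
         - (z - (τ:ℂ)) * (ℓ j : ℂ) / Complex.sin ((τ * ℓ j : ℝ) : ℂ) ^ 2‖ ≤ 8 * γ ^ 2 := by
    intro j
    rw [hzw j]
    exact (hkey j).2
  calc ‖∑ j : Fin N,
        (Complex.sin ((z - (τ:ℂ)) * (ℓ j : ℂ)) /
          (Complex.sin (z * (ℓ j : ℂ)) * Complex.sin ((τ * ℓ j : ℝ) : ℂ))
         - (z - (τ:ℂ)) * (ℓ j : ℂ) / Complex.sin ((τ * ℓ j : ℝ) : ℂ) ^ 2)‖
      ≤ ∑ j : Fin N, ‖Complex.sin ((z - (τ:ℂ)) * (ℓ j : ℂ)) /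
          (Complex.sin (z * (ℓ j : ℂ)) * Complex.sin ((τ * ℓ j : ℝ) : ℂ))
         - (z - (τ:ℂ)) * (ℓ j : ℂ) / Complex.sin ((τ * ℓ j : ℝ) : ℂ) ^ 2‖ :=
        norm_sum_le _ _
    _ ≤ ∑ _j : Fin N, 8 * γ ^ 2 := Finset.sum_le_sum fun j _ => hterm j
    _ = (N:ℝ) * (8 * γ ^ 2) := by
        rw [Finset.sum_const, Finset.card_univ, Fintype.card_fin, nsmul_eq_mul]
    _ ≤ γ / 2 := by
        have h16pos : (0:ℝ) < 16 * Real.exp 1 * N := lt_of_lt_of_le (by norm_num) hden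
        have hγN : γ * (16 * Real.exp 1 * N) ≤ 1 := (le_div_iff₀ h16pos).mp hγub
        nlinarith [mul_le_mul_of_nonneg_left hγN hγ0,
          mul_nonneg (mul_nonneg (sub_nonneg.mpr he2) (sq_nonneg γ)) (by linarith : (0:ℝ) ≤ (N:ℝ))]
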